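/- The Mercedes-Benz frame X = ((0,1), (−√3/2, −1/2), (√3/2, −1/2)) in ℝ² is α-rectifying on the closed unit ball for α ≡ −1/2: for every x with ‖x‖ ≤ 1, the set {x_i : ⟨x, x_i⟩ ≥ −1/2} spans ℝ². -/

import Mathlib

set_option maxHeartbeats 1000000


open RealInnerProductSpace

lemma span_top_aux {S : Set (EuclideanSpace ℝ (Fin 2))} {x y : EuclideanSpace ℝ (Fin 2)}
    (hx : x ∈ S) (hy : y ∈ S)
    (h : ∀ w : EuclideanSpace ℝ (Fin 2), ∃ c d : ℝ, w = c • x + d • y) :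
    Submodule.span ℝ S = ⊤ := by
  rw [Submodule.eq_top_iff']
  intro w
  obtain ⟨c, d, hw⟩ := h w
  rw [hw]
  exact Submodule.add_mem _ (Submodule.smul_mem _ _ (Submodule.subset_span hx))
    (Submodule.smul_mem _ _ (Submodule.subset_span hy))

/-- The Mercedes-Benz frame in `ℝ²` is `α`-rectifying on the closed unit ball for
`α ≡ -1/2`. -/
theorem stmt_6 :
    ∀ v : EuclideanSpace ℝ (Fin 2), ‖v‖ ≤ 1 →
      Submodule.span ℝ
        {w : EuclideanSpace ℝ (Fin 2) |
          ∃ i : Fin 3,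
            w = (WithLp.toLp 2 (![![(0:ℝ), 1], ![-(Real.sqrt 3)/2, -(1:ℝ)/2],
                  ![(Real.sqrt 3)/2, -(1:ℝ)/2]] i) : EuclideanSpace ℝ (Fin 2)) ∧
            ⟪v, w⟫ ≥ -(1:ℝ)/2} = ⊤ := by
  intro v hv
  set a := v 0 with ha
  set b := v 1 with hb
  have hs3 : Real.sqrt 3 ^ 2 = 3 := Real.sq_sqrt (by norm_num)
  have hs3pos : (0:ℝ) < Real.sqrt 3 := Real.sqrt_pos.mpr (by norm_num)
  have hnorm : a ^ 2 + b ^ 2 ≤ 1 := by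
    have h1 : ‖v‖ ^ 2 ≤ 1 := by nlinarith [norm_nonneg v]
    have h2 : ‖v‖ ^ 2 = a ^ 2 + b ^ 2 := by
      rw [← real_inner_self_eq_norm_sq, PiLp.inner_apply, Fin.sum_univ_two]
      simp [ha, hb]
    linarith [h2 ▸ h1]
  -- inner products with the three vectors
  have hi1 : ⟪v, (WithLp.toLp 2 ![(0:ℝ), 1] : EuclideanSpace ℝ (Fin 2))⟫ = b := by
    rw [PiLp.inner_apply, Fin.sum_univ_two]; simp [ha, hb]
  have hi2 : ⟪v, (WithLp.toLp 2 ![-(Real.sqrt 3)/2, -(1:ℝ)/2] : EuclideanSpace ℝ (Fin 2))⟫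
      = -(Real.sqrt 3)/2 * a - b/2 := by
    rw [PiLp.inner_apply, Fin.sum_univ_two]; simp [ha, hb]; ring
  have hi3 : ⟪v, (WithLp.toLp 2 ![(Real.sqrt 3)/2, -(1:ℝ)/2] : EuclideanSpace ℝ (Fin 2))⟫
      = (Real.sqrt 3)/2 * a - b/2 := by
    rw [PiLp.inner_apply, Fin.sum_univ_two]; simp [ha, hb]; ring
  by_cases h1 : b ≥ -(1:ℝ)/2
  · by_cases h2 : -(Real.sqrt 3)/2 * a - b/2 ≥ -(1:ℝ)/2
    · -- use x1 and x2
      apply span_top_aux (x := (WithLp.toLp 2 ![(0:ℝ), 1] : EuclideanSpace ℝ (Fin 2)))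
        (y := (WithLp.toLp 2 ![-(Real.sqrt 3)/2, -(1:ℝ)/2] : EuclideanSpace ℝ (Fin 2)))
      · exact ⟨0, rfl, by rw [hi1]; exact h1⟩
      · exact ⟨1, rfl, by rw [hi2]; exact h2⟩
      · intro w
        refine ⟨w 1 - w 0 / Real.sqrt 3, -2 * w 0 / Real.sqrt 3, ?_⟩
        ext j
        fin_cases j <;>
          simp [PiLp.smul_apply, PiLp.add_apply, smul_eq_mul] <;>
          field_simp <;> nlinarith [hs3, hs3pos]
    · -- x2 fails, so x1 and x3 hold
      have h3 : (Real.sqrt 3)/2 * a - b/2 ≥ -(1:ℝ)/2 := by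
        nlinarith [sq_nonneg (a + Real.sqrt 3 * b), sq_nonneg (a - Real.sqrt 3 * b)]
      apply span_top_aux (x := (WithLp.toLp 2 ![(0:ℝ), 1] : EuclideanSpace ℝ (Fin 2)))
        (y := (WithLp.toLp 2 ![(Real.sqrt 3)/2, -(1:ℝ)/2] : EuclideanSpace ℝ (Fin 2)))
      · exact ⟨0, rfl, by rw [hi1]; exact h1⟩
      · exact ⟨2, rfl, by rw [hi3]; exact h3⟩
      · intro w
        refine ⟨w 1 + w 0 / Real.sqrt 3, 2 * w 0 / Real.sqrt 3, ?_⟩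
        ext j
        fin_cases j <;>
          simp [PiLp.smul_apply, PiLp.add_apply, smul_eq_mul] <;>
          field_simp <;> nlinarith [hs3, hs3pos]
  · -- x1 fails, so x2 and x3 hold
    have h2 : -(Real.sqrt 3)/2 * a - b/2 ≥ -(1:ℝ)/2 := by
      nlinarith [sq_nonneg (Real.sqrt 3 * a - b), sq_nonneg (Real.sqrt 3 * a + b)]
    have h3 : (Real.sqrt 3)/2 * a - b/2 ≥ -(1:ℝ)/2 := by
      nlinarith [sq_nonneg (Real.sqrt 3 * a - b), sq_nonneg (Real.sqrt 3 * a + b)]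
    apply span_top_aux (x := (WithLp.toLp 2 ![-(Real.sqrt 3)/2, -(1:ℝ)/2] : EuclideanSpace ℝ (Fin 2)))
      (y := (WithLp.toLp 2 ![(Real.sqrt 3)/2, -(1:ℝ)/2] : EuclideanSpace ℝ (Fin 2)))
    · exact ⟨1, rfl, by rw [hi2]; exact h2⟩
    · exact ⟨2, rfl, by rw [hi3]; exact h3⟩
    · intro w
      refine ⟨-w 1 - w 0 / Real.sqrt 3, -w 1 + w 0 / Real.sqrt 3, ?_⟩
      ext j
      fin_cases j <;>
        simp [PiLp.smul_apply, PiLp.add_apply, smul_eq_mul] <;>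
        field_simp <;> nlinarith [hs3, hs3pos]
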